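/- Given null metric hypersurface data {N,γ,ℓ,ℓ⁽²⁾} and any covector ω with ω(n) ≠ 0 everywhere and any function u, there exists a unique gauge element (z,ζ) with G_{(z,ζ)}(ℓ) = ω and G_{(z,ζ)}(ℓ⁽²⁾) = u; explicitly z = ω(n) and ζ = (1/ω(n))P(ω,·) + ((u − P(ω,ω))/(2ω(n)²)) n. -/

import Mathlib

open Module LinearMap

variable {N : Type*} {T : N → Type*} [∀ p, AddCommGroup (T p)] [∀ p, Module ℝ (T p)]

/-- Gauge action on the covector field: `G_{(z,ζ)}(ℓ) = z(ℓ + γ(ζ,·))`. -/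
noncomputable def gaugeL (γ : ∀ p, T p →ₗ[ℝ] T p →ₗ[ℝ] ℝ) (z : N → ℝ) (ζ : ∀ p, T p)
    (ℓ : ∀ p, Dual ℝ (T p)) : ∀ p, Dual ℝ (T p) :=
  fun p ↦ z p • (ℓ p + γ p (ζ p))

/-- Gauge action on the scalar field: `G_{(z,ζ)}(ℓ⁽²⁾) = z²(ℓ⁽²⁾ + 2ℓ(ζ) + γ(ζ,ζ))`. -/
noncomputable def gaugeL2 (γ : ∀ p, T p →ₗ[ℝ] T p →ₗ[ℝ] ℝ) (z : N → ℝ) (ζ : ∀ p, T p)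
    (ℓ : ∀ p, Dual ℝ (T p)) (l2 : N → ℝ) : N → ℝ :=
  fun p ↦ (z p) ^ 2 * (l2 p + 2 * ℓ p (ζ p) + γ p (ζ p) (ζ p))

/-- Gauge fixing: given null metric hypersurface data `{N,γ,ℓ,ℓ⁽²⁾}` (with associated `n`
and `P`), a covector field `ω` with `ω(n) ≠ 0` everywhere and a function `u`, there is a
unique gauge element `(z,ζ)` with `G_{(z,ζ)}(ℓ) = ω` and `G_{(z,ζ)}(ℓ⁽²⁾) = u`; it is
given by `z = ω(n)` and `ζ = ω(n)⁻¹ P(ω,·) + ((u - P(ω,ω))/(2ω(n)²)) n`. -/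
theorem gauge_fixing
    (γ : ∀ p, T p →ₗ[ℝ] T p →ₗ[ℝ] ℝ)
    (hγsym : ∀ p (x y : T p), γ p x y = γ p y x)
    (ℓ : ∀ p, Dual ℝ (T p)) (l2 : N → ℝ)
    (n : ∀ p, T p) (P : ∀ p, Dual ℝ (T p) →ₗ[ℝ] T p)
    (hγn : ∀ p, γ p (n p) = 0)
    (hℓn : ∀ p, ℓ p (n p) = 1)
    (hrad : ∀ p (x : T p), γ p x = 0 → ∃ c : ℝ, x = c • n p)
    (hPsym : ∀ p (ω χ : Dual ℝ (T p)), ω (P p χ) = χ (P p ω))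
    (hPℓ : ∀ p, P p (ℓ p) + l2 p • n p = 0)
    (hPγ : ∀ p (x : T p), P p (γ p x) + ℓ p x • n p = x)
    (ω : ∀ p, Dual ℝ (T p)) (hω : ∀ p, ω p (n p) ≠ 0) (u : N → ℝ)
    (z₀ : N → ℝ) (hz₀ : z₀ = fun p ↦ ω p (n p))
    (ζ₀ : ∀ p, T p)
    (hζ₀ : ζ₀ = fun p ↦ (ω p (n p))⁻¹ • P p (ω p)
      + ((u p - ω p (P p (ω p))) / (2 * (ω p (n p)) ^ 2)) • n p) :
    ((∀ p, z₀ p ≠ 0) ∧ gaugeL γ z₀ ζ₀ ℓ = ω ∧ gaugeL2 γ z₀ ζ₀ ℓ l2 = u) ∧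
    (∀ (z : N → ℝ) (ζ : ∀ p, T p), (∀ p, z p ≠ 0) →
      gaugeL γ z ζ ℓ = ω → gaugeL2 γ z ζ ℓ l2 = u → z = z₀ ∧ ζ = ζ₀) := by

  subst hz₀ hζ₀
  -- Auxiliary identities
  have hPγ' : ∀ p (x : T p), P p (γ p x) = x - ℓ p x • n p := by
    intro p x
    have h := hPγ p x
    linear_combination (norm := module) h
  have hγP : ∀ p (χ : Dual ℝ (T p)) (x : T p),
      γ p (P p χ) x = χ x - ℓ p x * χ (n p) := by
    intro p χ x
    rw [hγsym p _ x, hPsym p (γ p x) χ, hPγ' p x, map_sub, map_smul, smul_eq_mul]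
  have hℓP : ∀ p, ℓ p (P p (ω p)) = -(l2 p * ω p (n p)) := by
    intro p
    rw [hPsym p (ℓ p) (ω p)]
    have h := hPℓ p
    have h2 : P p (ℓ p) = -(l2 p • n p) := by
      linear_combination (norm := module) h
    rw [h2, map_neg, map_smul, smul_eq_mul]
  set ζ₀ : ∀ p, T p := fun p ↦ (ω p (n p))⁻¹ • P p (ω p)
      + ((u p - ω p (P p (ω p))) / (2 * (ω p (n p)) ^ 2)) • n p with hζ₀
  -- evaluation of covectors on ζ₀
  have hℓζ₀ : ∀ p, ℓ p (ζ₀ p) = (ω p (n p))⁻¹ * (-(l2 p * ω p (n p)))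
      + (u p - ω p (P p (ω p))) / (2 * (ω p (n p)) ^ 2) := by
    intro p
    simp [hζ₀, map_add, map_smul, hℓP, hℓn, smul_eq_mul]
  have hωζ₀ : ∀ p, ω p (ζ₀ p) = (ω p (n p))⁻¹ * ω p (P p (ω p))
      + (u p - ω p (P p (ω p))) / (2 * (ω p (n p)) ^ 2) * ω p (n p) := by
    intro p
    simp [hζ₀, map_add, map_smul, smul_eq_mul]
  have hγζ₀ : ∀ p (x : T p), γ p (ζ₀ p) x
      = (ω p (n p))⁻¹ * (ω p x - ℓ p x * ω p (n p)) := by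
    intro p x
    simp [hζ₀, map_add, map_smul, hγn, hγP, smul_eq_mul]
  have hL : gaugeL γ (fun p ↦ ω p (n p)) ζ₀ ℓ = ω := by
    funext p
    apply LinearMap.ext
    intro x
    have hA := hω p
    simp only [gaugeL, LinearMap.smul_apply, LinearMap.add_apply, hγζ₀, smul_eq_mul]
    field_simp
    ring
  have hL2 : gaugeL2 γ (fun p ↦ ω p (n p)) ζ₀ ℓ l2 = u := by
    funext p
    have hA := hω p
    simp only [gaugeL2, hℓζ₀, hγζ₀ p (ζ₀ p), hωζ₀, hℓζ₀]
    field_simp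
    ring
  refine ⟨⟨hω, hL, hL2⟩, ?_⟩
  intro z ζ hz h1 h2
  -- z = z₀
  have hzeq : ∀ p, z p = ω p (n p) := by
    intro p
    have := congrFun h1 p
    have h := congrArg (fun (f : Dual ℝ (T p)) ↦ f (n p)) this
    simpa [gaugeL, hℓn, hγsym p (ζ p) (n p), hγn] using h
  have hzfun : z = fun p ↦ ω p (n p) := funext hzeq
  refine ⟨hzfun, ?_⟩
  funext p
  have hA := hω p
  -- γ (ζ p) = γ (ζ₀ p)
  have hγeq : γ p (ζ p) = γ p (ζ₀ p) := by
    apply LinearMap.ext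
    intro x
    have e1 := congrArg (fun (f : Dual ℝ (T p)) ↦ f x) (congrFun h1 p)
    have e2 := congrArg (fun (f : Dual ℝ (T p)) ↦ f x) (congrFun hL p)
    simp only [gaugeL, LinearMap.smul_apply, LinearMap.add_apply, smul_eq_mul,
      hzeq p] at e1 e2
    have h3 : ℓ p x + γ p (ζ p) x = ℓ p x + γ p (ζ₀ p) x :=
      mul_left_cancel₀ hA (e1.trans e2.symm)
    linarith
  have hγ0 : γ p (ζ p - ζ₀ p) = 0 := by
    rw [map_sub, hγeq, sub_self]
  obtain ⟨c, hc⟩ := hrad p _ hγ0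
  have hζc : ζ p = ζ₀ p + c • n p := by
    have := hc
    linear_combination (norm := module) this
  -- use gaugeL2 to show c = 0
  have e1 := congrFun h2 p
  have e2 := congrFun hL2 p
  simp only [gaugeL2, hzeq p] at e1 e2
  have hsq : (ω p (n p)) ^ 2 ≠ 0 := pow_ne_zero _ hA
  have key : l2 p + 2 * ℓ p (ζ p) + γ p (ζ p) (ζ p)
      = l2 p + 2 * ℓ p (ζ₀ p) + γ p (ζ₀ p) (ζ₀ p) :=
    mul_left_cancel₀ hsq (e1.trans e2.symm)
  have hℓc : ℓ p (ζ p) = ℓ p (ζ₀ p) + c := by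
    rw [hζc]; simp [map_add, map_smul, hℓn, smul_eq_mul]
  have hγζn : γ p (ζ₀ p) (n p) = 0 := by
    rw [hγsym p (ζ₀ p) (n p), hγn]; rfl
  have hγc : γ p (ζ p) (ζ p) = γ p (ζ₀ p) (ζ₀ p) := by
    rw [hγeq, hζc]
    simp [map_add, map_smul, hγζn, smul_eq_mul]
  rw [hℓc, hγc] at key
  have hc0 : c = 0 := by linarith
  rw [hζc, hc0, zero_smul, add_zero]
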